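/- Let (C, ⊗, 𝟙) be a monoidal category possessing a zero object. Let A be a monoid object of C with unit η : 𝟙 → A, and let E be a left A-module object with action ρ : A ⊗ E → E. If F is an object of C such that A ⊗ F is a zero object of C, then every morphism F → E in C factors through the zero object, i.e. equals the zero morphism; in particular the hom-set Hom_C(F, E) has exactly one element. -/

import Mathlib

open CategoryTheory CategoryTheory.Limits MonoidalCategory

universe v u

lemma module_factor
    {C : Type u} [Category.{v} C] [MonoidalCategory C]
    (A : Mon C) (E : Mod C A.X) (F : C) (f : F ⟶ E.X) :
    f = (λ_ F).inv ≫ (MonObj.one (X := A.X) ▷ F) ≫ ((A.X ◁ f) ≫ ModObj.smul (M := A.X) (X := E.X)) := by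
  rw [← Category.assoc (MonObj.one (X := A.X) ▷ F), ← whisker_exchange, Category.assoc,
    ModObj.one_smul_self A.X E.X, leftUnitor_naturality, Iso.inv_hom_id_assoc]

/-- Proposition 8.9 of the paper, hom-set form: in a monoidal category with a
zero object, if `A` is a monoid object, `E` a left `A`-module object and `F` an
object with `A ⊗ F` a zero object, then every morphism `F ⟶ E` factors through
a zero object, and the hom-set `F ⟶ E` has exactly one element. -/
theorem module_is_local
    {C : Type u} [Category.{v} C] [MonoidalCategory C] [HasZeroObject C]
    (A : Mon C) (E : Mod C A.X) (F : C)
    (hF : IsZero (MonoidalCategory.tensorObj A.X F)) :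
    (∀ f : F ⟶ E.X, ∃ (Z : C) (_ : IsZero Z) (g : F ⟶ Z) (h : Z ⟶ E.X), f = g ≫ h)
      ∧ Nonempty (Unique (F ⟶ E.X)) := by
  constructor
  · intro f
    exact ⟨A.X ⊗ F, hF, (λ_ F).inv ≫ (MonObj.one (X := A.X) ▷ F), (A.X ◁ f) ≫ ModObj.smul (M := A.X) (X := E.X),
      by simpa using module_factor A E F f⟩
  · refine ⟨⟨⟨(λ_ F).inv ≫ (MonObj.one (X := A.X) ▷ F) ≫ hF.to_ E.X⟩, fun f => ?_⟩⟩
    calc f = (λ_ F).inv ≫ (MonObj.one (X := A.X) ▷ F) ≫ ((A.X ◁ f) ≫ ModObj.smul (M := A.X) (X := E.X)) := module_factor A E F f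
    _ = (λ_ F).inv ≫ (MonObj.one (X := A.X) ▷ F) ≫ hF.to_ E.X := by
        congr 2
        exact hF.eq_of_src _ _
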